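/- Let F_q be a finite field with q elements. Then in the polynomial ring F_q[x,y], Σ_{λ ∈ F_q} (x + λy)^{q−1} = − y^{q−1}. -/

import Mathlib

open Finset MvPolynomial

lemma sum_pow_card_sub_one (K : Type*) [Field K] [Fintype K] :
    ∑ x : K, x ^ (Fintype.card K - 1) = -1 := by
  classical
  have h1 : 1 < Fintype.card K := Fintype.one_lt_card
  let φ : Kˣ ↪ K := ⟨Units.val, Units.val_injective⟩
  have hmap : univ.map φ = univ \ {0} := by
    ext x
    simpa only [mem_map, mem_univ, Function.Embedding.coeFn_mk, true_and, mem_sdiff,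
      mem_singleton, φ] using (show (∃ a : Kˣ, (a : K) = x) ↔ ¬x = 0 from isUnit_iff_ne_zero)
  calc
    ∑ x : K, x ^ (Fintype.card K - 1)
        = ∑ x ∈ univ \ {(0 : K)}, x ^ (Fintype.card K - 1) := by
      rw [← sum_sdiff ({0} : Finset K).subset_univ, sum_singleton,
        zero_pow (by omega), add_zero]
    _ = ∑ x : Kˣ, (x ^ (Fintype.card K - 1) : K) := by
      simp [φ, ← hmap, univ.sum_map φ]
    _ = -1 := by rw [FiniteField.sum_pow_units K, if_pos dvd_rfl]

theorem stmt6 (F : Type*) [Field F] [Fintype F] (q : ℕ) (hq : Fintype.card F = q) :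
    ∑ l : F, (MvPolynomial.X 0 + MvPolynomial.C l * MvPolynomial.X 1 :
      MvPolynomial (Fin 2) F) ^ (q - 1)
    = - (MvPolynomial.X 1 : MvPolynomial (Fin 2) F) ^ (q - 1) := by
  classical
  have h1 : 1 < q := hq ▸ Fintype.one_lt_card
  set n := q - 1 with hn
  simp only [add_pow]
  rw [Finset.sum_comm]
  have key : ∀ k ∈ Finset.range (n + 1),
      (∑ l : F, (X 0 : MvPolynomial (Fin 2) F) ^ k * (C l * X 1) ^ (n - k) * (n.choose k : MvPolynomial (Fin 2) F))
      = if k = 0 then -(X 1 : MvPolynomial (Fin 2) F) ^ n else 0 := by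
    intro k hk
    have : (∑ l : F, (X 0 : MvPolynomial (Fin 2) F) ^ k * (C l * X 1) ^ (n - k) * (n.choose k : MvPolynomial (Fin 2) F))
        = (X 0 : MvPolynomial (Fin 2) F) ^ k * X 1 ^ (n - k) * (n.choose k : MvPolynomial (Fin 2) F)
          * C (∑ l : F, l ^ (n - k)) := by
      rw [map_sum, Finset.mul_sum]
      apply Finset.sum_congr rfl
      intro l _
      rw [mul_pow, ← C_pow]
      ring
    rw [this]
    rcases eq_or_ne k 0 with rfl | hk0
    · have hs : (∑ l : F, l ^ (n - 0)) = -1 := by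
        simpa [hn, hq] using sum_pow_card_sub_one F
      rw [hs, if_pos rfl]
      simp
    · have hlt : n - k < Fintype.card F - 1 := by
        rw [hq, ← hn]; omega
      rw [FiniteField.sum_pow_lt_card_sub_one F _ hlt, if_neg hk0]
      simp
  rw [Finset.sum_congr rfl key, Finset.sum_ite_eq' (Finset.range (n+1)) 0,
    if_pos (Finset.mem_range.mpr (by omega))]
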